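/- arXiv:1703.09626 — 4 statements merged into one kernel-verified Lean document; each statement's English description precedes it below -/
import Mathlib

section
/- If Y is a discrete random variable with cumulative distribution function F and probability mass function f, and U is an independent uniform random variable on [0,1], then the randomized quantile residual Z = F(Y) - U·f(Y) is uniformly distributed on [0,1]. -/
open MeasureTheory ProbabilityTheory

/-- Interval computation: the mass contributed by one atom. -/
lemma rqr_aux1 (a b t : ℝ) (hb : 0 ≤ b) (hab : 0 ≤ a - b) :
    ENNReal.ofReal b * (volume.restrict (Set.Icc (0:ℝ) 1)) {u : ℝ | a - u * b ≤ t} =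
      ENNReal.ofReal (min a t - min (a - b) t) := by
  rcases eq_or_lt_of_le hb with hb0 | hb0
  · simp [← hb0]
  · have hset : {u : ℝ | a - u * b ≤ t} = Set.Ici ((a - t) / b) := by
      ext u
      simp only [Set.mem_setOf_eq, Set.mem_Ici]
      rw [div_le_iff₀ hb0]
      constructor <;> intro h <;> linarith
    rw [hset, Measure.restrict_apply measurableSet_Ici]
    have hIcc : Set.Ici ((a - t) / b) ∩ Set.Icc (0:ℝ) 1 = Set.Icc (max ((a - t) / b) 0) 1 := by
      ext u
      simp only [Set.mem_inter_iff, Set.mem_Ici, Set.mem_Icc, max_le_iff]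
      tauto
    rw [hIcc, Real.volume_Icc, ← ENNReal.ofReal_mul hb0.le]
    rcases le_or_gt (a - b) t with h1 | h1
    · rw [min_eq_left h1]
      congr 1
      rcases le_or_gt a t with h2 | h2
      · have hc : (a - t) / b ≤ 0 := div_nonpos_of_nonpos_of_nonneg (by linarith) hb0.le
        rw [max_eq_right hc, min_eq_left h2]
        ring
      · have hc : 0 ≤ (a - t) / b := div_nonneg (by linarith) hb0.le
        rw [max_eq_left hc, min_eq_right h2.le]
        field_simp
        ring
    · have ht1 : min a t = t := min_eq_right (by linarith)
      have ht2 : min (a - b) t = t := min_eq_right h1.le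
      rw [ht1, ht2, sub_self, ENNReal.ofReal_zero]
      have hc : max ((a - t) / b) 0 = (a - t) / b :=
        max_eq_left (div_nonneg (by linarith) hb0.le)
      rw [hc, ENNReal.ofReal_eq_zero]
      have : b * (1 - (a - t) / b) = b - (a - t) := by field_simp
      rw [this]
      linarith

/-- Telescoping sum of nonnegative increments of a convergent monotone sequence. -/
lemma rqr_aux2 (g : ℕ → ℝ) (hg : Monotone g) (L : ℝ)
    (hL : Filter.Tendsto g Filter.atTop (nhds L)) :
    ∑' n, ENNReal.ofReal (g (n + 1) - g n) = ENNReal.ofReal (L - g 0) := by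
  rw [ENNReal.tsum_eq_iSup_nat]
  have hpart : ∀ N, ∑ i ∈ Finset.range N, ENNReal.ofReal (g (i + 1) - g i)
      = ENNReal.ofReal (g N - g 0) := by
    intro N
    rw [← ENNReal.ofReal_sum_of_nonneg (fun i _ => sub_nonneg.mpr (hg (Nat.le_succ i))),
      Finset.sum_range_sub g]
  simp_rw [hpart]
  have hmono : Monotone fun N => ENNReal.ofReal (g N - g 0) := fun m n h =>
    ENNReal.ofReal_le_ofReal (by have := hg h; linarith)
  have htd : Filter.Tendsto (fun N => ENNReal.ofReal (g N - g 0)) Filter.atTop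
      (nhds (ENNReal.ofReal (L - g 0))) :=
    (ENNReal.continuous_ofReal.tendsto _).comp (hL.sub_const _)
  exact (tendsto_nhds_unique (tendsto_atTop_iSup hmono) htd)

/-- Randomized quantile residuals of a discrete random variable are uniform on [0,1]. -/
theorem rqr_uniform {Ω : Type*} [MeasurableSpace Ω] (P : Measure Ω) [IsProbabilityMeasure P]
    (Y : Ω → ℕ) (U : Ω → ℝ) (hY : Measurable Y) (hU : Measurable U)
    (hind : IndepFun Y U P)
    (hUunif : P.map U = volume.restrict (Set.Icc (0:ℝ) 1))
    (F f : ℕ → ℝ)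
    (hF : ∀ y, F y = (P {ω | Y ω ≤ y}).toReal)
    (hf : ∀ y, f y = (P {ω | Y ω = y}).toReal) :
    P.map (fun ω => F (Y ω) - U ω * f (Y ω)) = volume.restrict (Set.Icc (0:ℝ) 1) := by
  classical
  have hFf0 : F 0 = f 0 := by
    rw [hF, hf]
    congr 2
    ext ω
    simp [Nat.le_zero]
  have hstep : ∀ n, F (n + 1) = F n + f (n + 1) := by
    intro n
    have hset : {ω | Y ω ≤ n + 1} = {ω | Y ω ≤ n} ∪ {ω | Y ω = n + 1} := by
      ext ω
      simp only [Set.mem_setOf_eq, Set.mem_union]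
      omega
    have hdisj : Disjoint {ω | Y ω ≤ n} {ω | Y ω = n + 1} := by
      rw [Set.disjoint_left]
      intro ω h1 h2
      simp only [Set.mem_setOf_eq] at h1 h2
      omega
    rw [hF, hF, hf, hset,
      measure_union hdisj (hY (measurableSet_singleton (n + 1))),
      ENNReal.toReal_add (measure_ne_top P _) (measure_ne_top P _)]
  have hfnn : ∀ n, 0 ≤ f n := fun n => by rw [hf]; exact ENNReal.toReal_nonneg
  have hFnn : ∀ n, 0 ≤ F n := fun n => by rw [hF]; exact ENNReal.toReal_nonneg
  have hFmono : Monotone F := monotone_nat_of_le_succ fun n => by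
    have := hfnn (n + 1); rw [hstep n]; linarith
  have hFlim : Filter.Tendsto F Filter.atTop (nhds 1) := by
    have h1 : Filter.Tendsto (fun n : ℕ => P {ω | Y ω ≤ n}) Filter.atTop
        (nhds (P (⋃ n : ℕ, {ω | Y ω ≤ n}))) := by
      apply tendsto_measure_iUnion_atTop
      intro m n h ω hω
      simp only [Set.mem_setOf_eq] at hω ⊢
      omega
    have huniv : (⋃ n : ℕ, {ω | Y ω ≤ n}) = Set.univ := by
      ext ω
      simp only [Set.mem_iUnion, Set.mem_setOf_eq, Set.mem_univ, iff_true]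
      exact ⟨Y ω, le_rfl⟩
    rw [huniv, measure_univ] at h1
    have h2 := (ENNReal.tendsto_toReal (by norm_num : (1 : ENNReal) ≠ ⊤)).comp h1
    simp only [Function.comp_def, ENNReal.toReal_one] at h2
    convert h2 using 2 with n
    · exact hF n
  have hZ : Measurable fun ω => F (Y ω) - U ω * f (Y ω) :=
    (measurable_from_top.comp hY).sub (hU.mul (measurable_from_top.comp hY))
  haveI : IsProbabilityMeasure (P.map fun ω => F (Y ω) - U ω * f (Y ω)) :=
    Measure.isProbabilityMeasure_map hZ.aemeasurable
  refine Measure.ext_of_Iic _ _ fun t => ?_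
  rw [Measure.map_apply hZ measurableSet_Iic]
  set B : ℕ → Set ℝ := fun n => {u : ℝ | F n - u * f n ≤ t} with hBdef
  have hB : ∀ n, MeasurableSet (B n) := fun n =>
    measurableSet_le (measurable_const.sub (measurable_id.mul_const (f n))) measurable_const
  have hpre : (fun ω => F (Y ω) - U ω * f (Y ω)) ⁻¹' Set.Iic t
      = ⋃ n, (Y ⁻¹' {n} ∩ U ⁻¹' B n) := by
    ext ω
    simp only [Set.mem_preimage, Set.mem_Iic, Set.mem_iUnion, Set.mem_inter_iff,
      Set.mem_singleton_iff, hBdef, Set.mem_setOf_eq]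
    constructor
    · intro h
      exact ⟨Y ω, rfl, h⟩
    · rintro ⟨n, hn, h⟩
      rw [hn]
      exact h
  have hdisj : Pairwise (Function.onFun Disjoint fun n => Y ⁻¹' {n} ∩ U ⁻¹' B n) := by
    intro m n hmn
    rw [Function.onFun, Set.disjoint_left]
    rintro ω ⟨h1, -⟩ ⟨h2, -⟩
    simp only [Set.mem_preimage, Set.mem_singleton_iff] at h1 h2
    exact hmn (h1.symm.trans h2)
  rw [hpre, measure_iUnion hdisj fun n =>
    (hY (measurableSet_singleton n)).inter (hU (hB n))]
  have hab : ∀ n, 0 ≤ F n - f n := by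
    intro n
    cases n with
    | zero => rw [hFf0]; simp
    | succ k => rw [hstep k]; simpa using hFnn k
  have hterm : ∀ n, P (Y ⁻¹' {n} ∩ U ⁻¹' B n)
      = ENNReal.ofReal (min (F n) t - min (F n - f n) t) := by
    intro n
    rw [hind.measure_inter_preimage_eq_mul _ _ (measurableSet_singleton n) (hB n)]
    have hPU : P (U ⁻¹' B n) = (volume.restrict (Set.Icc (0:ℝ) 1)) (B n) := by
      rw [← hUunif, Measure.map_apply hU (hB n)]
    have hPY : P (Y ⁻¹' {n}) = ENNReal.ofReal (f n) := by
      rw [hf, ENNReal.ofReal_toReal (measure_ne_top P _)]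
      rfl
    rw [hPU, hPY]
    exact rqr_aux1 (F n) (f n) t (hfnn n) (hab n)
  simp_rw [hterm]
  set g : ℕ → ℝ := fun n => min (Nat.casesOn n 0 F) t with hgdef
  have hgmin : ∀ n, min (F n) t - min (F n - f n) t = g (n + 1) - g n := by
    intro n
    cases n with
    | zero =>
      have : F 0 - f 0 = 0 := by rw [hFf0]; ring
      simp [hgdef, this]
    | succ k =>
      have : F (k + 1) - f (k + 1) = F k := by rw [hstep k]; ring
      simp [hgdef, this]
  simp_rw [hgmin]
  have hgmono : Monotone g := by
    apply monotone_nat_of_le_succ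
    intro n
    cases n with
    | zero => exact min_le_min (hFnn 0) le_rfl
    | succ k => exact min_le_min (hFmono (Nat.le_succ k)) le_rfl
  have hglim : Filter.Tendsto g Filter.atTop (nhds (min 1 t)) := by
    rw [← Filter.tendsto_add_atTop_iff_nat 1]
    exact hFlim.min tendsto_const_nhds
  rw [rqr_aux2 g hgmono (min 1 t) hglim]
  rw [Measure.restrict_apply measurableSet_Iic]
  have hIcc : Set.Iic t ∩ Set.Icc (0:ℝ) 1 = Set.Icc 0 (min t 1) := by
    ext u
    simp only [Set.mem_inter_iff, Set.mem_Iic, Set.mem_Icc, le_min_iff]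
    tauto
  rw [hIcc, Real.volume_Icc]
  have hg0 : g 0 = min 0 t := rfl
  rw [hg0]
  rcases le_total t 0 with ht | ht
  · rw [min_eq_right (ht.trans zero_le_one), min_eq_right ht, sub_self,
      min_eq_left (ht.trans zero_le_one)]
    rw [ENNReal.ofReal_zero, eq_comm, ENNReal.ofReal_eq_zero]
    linarith
  · rw [min_eq_left ht, min_comm 1 t, sub_zero]
end

section
/- For a discrete random variable Y with cdf F and pmf f, U ~ U[0,1] independent of Y, Z = F(Y) - U·f(Y), and a cutoff a ∈ (0,1), the event {Z ≥ a} equals the event {Y ≥ y*(a)+2} ∪ {Y = y*(a)+1 and U ≤ t_a}, where y*(a) = max{y : F(y) ≤ a} and t_a = (F(y*(a)+1) - a)/f(y*(a)+1), assuming f(y*(a)+1) > 0. -/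
open MeasureTheory ProbabilityTheory

/-- The event {Z ≥ a} equals {Y ≥ y*(a)+2} ∪ {Y = y*(a)+1, U ≤ t_a}. -/
theorem rqr_event_decomposition {Ω : Type*} [MeasurableSpace Ω]
    (P : Measure Ω) [IsProbabilityMeasure P]
    (Y : Ω → ℕ) (U : Ω → ℝ) (hY : Measurable Y) (hU : Measurable U)
    (hind : IndepFun Y U P)
    (hUunif : P.map U = volume.restrict (Set.Icc (0:ℝ) 1))
    (F f : ℕ → ℝ)
    (hF : ∀ y, F y = (P {ω | Y ω ≤ y}).toReal)
    (hf : ∀ y, f y = (P {ω | Y ω = y}).toReal)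
    (a : ℝ) (ha : a ∈ Set.Ioo (0:ℝ) 1)
    (ys : ℕ) (hys : IsGreatest {y : ℕ | F y ≤ a} ys)
    (hfa : 0 < f (ys + 1))
    (ta : ℝ) (hta : ta = (F (ys + 1) - a) / f (ys + 1)) :
    ∀ᵐ ω ∂P, (a ≤ F (Y ω) - U ω * f (Y ω) ↔
      (ys + 2 ≤ Y ω ∨ (Y ω = ys + 1 ∧ U ω ≤ ta))) := by
  -- basic facts about F and f
  have hfin : ∀ s : Set Ω, P s ≠ ⊤ := fun s => measure_ne_top P s
  have hfnn : ∀ n, 0 ≤ f n := fun n => (hf n) ▸ ENNReal.toReal_nonneg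
  have hmono : ∀ m n : ℕ, m ≤ n → F m ≤ F n := by
    intro m n hmn
    rw [hF, hF]
    exact ENNReal.toReal_mono (hfin _)
      (measure_mono (fun ω (h : Y ω ≤ m) => le_trans h hmn))
  have hstep : ∀ n : ℕ, F (n + 1) = F n + f (n + 1) := by
    intro n
    rw [hF, hF, hf]
    rw [← ENNReal.toReal_add (hfin _) (hfin _)]
    congr 1
    rw [← measure_union ?_ (show MeasurableSet {ω | Y ω = n+1} from hY (measurableSet_singleton (n+1)))]
    · congr 1
      ext ω
      simp only [Set.mem_union, Set.mem_setOf_eq]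
      omega
    · rw [Set.disjoint_left]
      intro ω h1 h2
      simp only [Set.mem_setOf_eq] at h1 h2
      omega
  have hFgt : a < F (ys + 1) := by
    by_contra h
    push_neg at h
    have := hys.2 h
    omega
  -- a.e. U ∈ (0, 1]
  have hU01 : ∀ᵐ ω ∂P, U ω ∈ Set.Ioc (0:ℝ) 1 := by
    rw [ae_iff]
    have hms : MeasurableSet (Set.Ioc (0:ℝ) 1)ᶜ := measurableSet_Ioc.compl
    have : P (U ⁻¹' (Set.Ioc (0:ℝ) 1)ᶜ) = 0 := by
      rw [← Measure.map_apply hU hms, hUunif,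
        Measure.restrict_apply hms]
      have : (Set.Ioc (0:ℝ) 1)ᶜ ∩ Set.Icc 0 1 = {0} := by
        ext x
        simp only [Set.mem_inter_iff, Set.mem_compl_iff, Set.mem_Ioc, Set.mem_Icc,
          Set.mem_singleton_iff]
        constructor
        · rintro ⟨h1, h2, h3⟩; by_contra h; push_neg at h1; rcases h1 (lt_of_le_of_ne h2 (Ne.symm h)) with h1; linarith
        · rintro rfl; norm_num
      rw [this, Real.volume_singleton]
    exact this
  -- a.e. f (Y ω) > 0
  have hfY : ∀ᵐ ω ∂P, 0 < f (Y ω) := by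
    rw [ae_iff]
    have hsub : {ω | ¬ 0 < f (Y ω)} ⊆ ⋃ n ∈ {n : ℕ | f n = 0}, Y ⁻¹' {n} := by
      intro ω h
      simp only [Set.mem_setOf_eq, not_lt] at h
      have : f (Y ω) = 0 := le_antisymm h (hfnn _)
      exact Set.mem_biUnion this rfl
    refine measure_mono_null hsub (measure_biUnion_null_iff (Set.to_countable _) |>.2 ?_)
    intro n hn
    simp only [Set.mem_setOf_eq] at hn
    rw [hf] at hn
    have : P {ω | Y ω = n} = 0 := by
      rwa [ENNReal.toReal_eq_zero_iff, or_iff_left (hfin _)] at hn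
    exact this
  filter_upwards [hU01, hfY] with ω hUω hfω
  obtain ⟨hU0, hU1⟩ := hUω
  constructor
  · intro hZ
    rcases lt_trichotomy (Y ω) (ys + 1) with h | h | h
    · -- Y ω ≤ ys : contradiction
      exfalso
      have hFle : F (Y ω) ≤ a := le_trans (hmono _ _ (by omega)) hys.1
      have : 0 < U ω * f (Y ω) := mul_pos hU0 hfω
      linarith
    · right
      refine ⟨h, ?_⟩
      rw [h] at hZ
      rw [hta, le_div_iff₀ hfa]
      linarith
    · left; omega
  · rintro (h | ⟨heq, hUta⟩)
    · obtain ⟨k, hk⟩ : ∃ k, Y ω = k + 1 := ⟨Y ω - 1, by omega⟩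
      have hk1 : ys + 1 ≤ k := by omega
      have h1 : F (ys + 1) ≤ F k := hmono _ _ hk1
      have h2 : F (Y ω) = F k + f (Y ω) := by rw [hk]; exact hstep k
      have h3 : U ω * f (Y ω) ≤ f (Y ω) := by
        nlinarith [hfnn (Y ω)]
      linarith
    · rw [heq]
      have : U ω * f (ys + 1) ≤ F (ys + 1) - a := by
        rw [hta, le_div_iff₀ hfa] at hUta
        linarith
      linarith
end

section
/- For a discrete random variable Y with cdf F and pmf f, U ~ U[0,1] independent of Y, Z = F(Y) - U·f(Y), and cutoffs 0 < a < b < 1, the conditional distribution of Y given {a ≤ Z ≤ b} has pmf p(y) = f(y)/Q for T_a ≤ y ≤ T_b, p(y) = f(y)·t_a/Q for y = T_a - 1, p(y) = f(y)·(1 - t_b)/Q for y = T_b + 1, and p(y) = 0 otherwise, where T_a = y*(a)+2, T_b = y*(b), t_c = (F(y*(c)+1) - c)/f(y*(c)+1), and Q = F(T_b) - F(T_a - 1) + f(T_a - 1)·t_a + f(T_b + 1)·(1 - t_b). -/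
open MeasureTheory ProbabilityTheory

/-- Conditional pmf of Y given a ≤ Z ≤ b, where Z is the randomized quantile residual. -/
theorem conditional_pmf_given_rqr {Ω : Type*} [MeasurableSpace Ω]
    (P : Measure Ω) [IsProbabilityMeasure P]
    (Y : Ω → ℕ) (U : Ω → ℝ) (hY : Measurable Y) (hU : Measurable U)
    (hind : IndepFun Y U P)
    (hUunif : P.map U = volume.restrict (Set.Icc (0:ℝ) 1))
    (F f : ℕ → ℝ)
    (hF : ∀ y, F y = (P {ω | Y ω ≤ y}).toReal)
    (hf : ∀ y, f y = (P {ω | Y ω = y}).toReal)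
    (a b : ℝ) (ha : 0 < a) (hab : a < b) (hb : b < 1)
    (ysa ysb : ℕ)
    (hysa : IsGreatest {y : ℕ | F y ≤ a} ysa)
    (hysb : IsGreatest {y : ℕ | F y ≤ b} ysb)
    (hfa : 0 < f (ysa + 1)) (hfb : 0 < f (ysb + 1))
    (Ta Tb : ℕ) (hTa : Ta = ysa + 2) (hTb : Tb = ysb) (hTab : Ta ≤ Tb)
    (ta tb Q : ℝ)
    (hta : ta = (F (ysa + 1) - a) / f (ysa + 1))
    (htb : tb = (F (ysb + 1) - b) / f (ysb + 1))
    (hQ : Q = F Tb - F (ysa + 1) + f (ysa + 1) * ta + f (Tb + 1) * (1 - tb))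
    (hQpos : 0 < Q)
    (E : Set Ω)
    (hE : E = {ω | a ≤ F (Y ω) - U ω * f (Y ω) ∧ F (Y ω) - U ω * f (Y ω) ≤ b}) :
    ∀ y : ℕ, (P (E ∩ {ω | Y ω = y})).toReal / (P E).toReal =
      if Ta ≤ y ∧ y ≤ Tb then f y / Q
      else if y = ysa + 1 then f y * ta / Q
      else if y = Tb + 1 then f y * (1 - tb) / Q
      else 0 := by
  subst hTa hTb
  -- basic facts
  have hfin : ∀ s : Set Ω, P s ≠ ⊤ := fun s => measure_ne_top P s
  have hf0 : ∀ y, 0 ≤ f y := fun y => (hf y) ▸ ENNReal.toReal_nonneg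
  have hPf : ∀ y, P {ω | Y ω = y} = ENNReal.ofReal (f y) := by
    intro y; rw [hf y, ENNReal.ofReal_toReal (hfin _)]
  have hmono : Monotone F := by
    intro y z hyz
    rw [hF, hF]
    exact ENNReal.toReal_mono (hfin _) (measure_mono fun ω h => le_trans h hyz)
  have hstep : ∀ k : ℕ, F (k+1) = F k + f (k+1) := by
    intro k
    have hdisj : Disjoint {ω | Y ω ≤ k} {ω | Y ω = k+1} := by
      rw [Set.disjoint_left]; intro ω h1 h2
      simp only [Set.mem_setOf_eq] at h1 h2; omega
    have hm1 : MeasurableSet {ω | Y ω = k+1} := hY (measurableSet_singleton _)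
    have hun : {ω | Y ω ≤ k+1} = {ω | Y ω ≤ k} ∪ {ω | Y ω = k+1} := by
      ext ω; simp only [Set.mem_setOf_eq, Set.mem_union]; omega
    rw [hF, hF, hf, hun, measure_union hdisj hm1, ENNReal.toReal_add (hfin _) (hfin _)]
  have hFa1 : a < F (ysa+1) := by
    by_contra h
    have := hysa.2 (show (ysa+1) ∈ {y : ℕ | F y ≤ a} from not_lt.1 h)
    omega
  have hFb1 : b < F (Tb+1) := by
    by_contra h
    have := hysb.2 (show (Tb+1) ∈ {y : ℕ | F y ≤ b} from not_lt.1 h)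
    omega
  have hFysa : F ysa ≤ a := hysa.1
  have hFTb : F Tb ≤ b := hysb.1
  have hba : ysa + 2 ≤ Tb := hTab
  subst hE
  set S : Set Ω := {ω | a ≤ F (Y ω) - U ω * f (Y ω) ∧ F (Y ω) - U ω * f (Y ω) ≤ b} with hS
  -- key computation for f y > 0
  have key : ∀ y : ℕ, 0 < f y →
      P (S ∩ {ω | Y ω = y}) =
        ENNReal.ofReal (f y) *
          ENNReal.ofReal (min ((F y - a)/f y) 1 - max ((F y - b)/f y) 0) := by
    intro y hfy
    have hset : S ∩ {ω | Y ω = y} =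
        Y ⁻¹' {y} ∩ U ⁻¹' Set.Icc ((F y - b)/f y) ((F y - a)/f y) := by
      ext ω
      simp only [hS, Set.mem_inter_iff, Set.mem_setOf_eq, Set.mem_preimage,
        Set.mem_singleton_iff, Set.mem_Icc]
      constructor
      · rintro ⟨⟨h1, h2⟩, hy⟩
        rw [hy] at h1 h2
        exact ⟨hy, (div_le_iff₀ hfy).2 (by linarith), (le_div_iff₀ hfy).2 (by linarith)⟩
      · rintro ⟨hy, h1, h2⟩
        have h1' := (div_le_iff₀ hfy).1 h1
        have h2' := (le_div_iff₀ hfy).1 h2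
        rw [hy]
        exact ⟨⟨by linarith, by linarith⟩, rfl⟩
    rw [hset, hind.measure_inter_preimage_eq_mul _ _ (measurableSet_singleton y) measurableSet_Icc,
      ← Measure.map_apply hU measurableSet_Icc, hUunif,
      Measure.restrict_apply measurableSet_Icc, Set.Icc_inter_Icc, Real.volume_Icc]
    congr 1
    exact hPf y
  have hzero_f : ∀ y, f y = 0 → P (S ∩ {ω | Y ω = y}) = 0 := by
    intro y hy
    have h1 : P (S ∩ {ω | Y ω = y}) ≤ P {ω | Y ω = y} := measure_mono Set.inter_subset_right
    rw [hPf y, hy, ENNReal.ofReal_zero] at h1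
    exact le_antisymm h1 zero_le
  -- values per case
  have hval_mid : ∀ y, ysa + 2 ≤ y → y ≤ Tb →
      P (S ∩ {ω | Y ω = y}) = ENNReal.ofReal (f y) := by
    intro y hy1 hy2
    rcases eq_or_lt_of_le (hf0 y) with hfy | hfy
    · rw [hzero_f y hfy.symm, ← hfy, ENNReal.ofReal_zero]
    · obtain ⟨k, rfl⟩ : ∃ k, y = k + 1 := ⟨y - 1, by omega⟩
      have hFk : a < F k := lt_of_lt_of_le hFa1 (hmono (by omega))
      have hFy : F (k+1) ≤ b := le_trans (hmono hy2) hFTb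
      have hst := hstep k
      have hr : (1:ℝ) ≤ (F (k+1) - a)/f (k+1) := (le_div_iff₀ hfy).2 (by linarith)
      have hl : (F (k+1) - b)/f (k+1) ≤ 0 := (div_le_iff₀ hfy).2 (by linarith)
      rw [key _ hfy, min_eq_right hr, max_eq_right hl]
      norm_num
  have hta0 : 0 ≤ ta := le_of_lt (by rw [hta]; exact div_pos (by linarith) hfa)
  have hta1 : ta ≤ 1 := by
    rw [hta]
    have := hstep ysa
    exact (div_le_iff₀ hfa).2 (by linarith)
  have htb0 : 0 ≤ tb := le_of_lt (by rw [htb]; exact div_pos (by linarith) hfb)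
  have htb1 : tb ≤ 1 := by
    rw [htb]
    have := hstep Tb
    exact (div_le_iff₀ hfb).2 (by linarith)
  have hval_a : P (S ∩ {ω | Y ω = ysa+1}) = ENNReal.ofReal (f (ysa+1) * ta) := by
    have hFy : F (ysa+1) ≤ b := le_trans (hmono (by omega)) hFTb
    have hr : (F (ysa+1) - a)/f (ysa+1) ≤ 1 := hta ▸ hta1
    have hl : (F (ysa+1) - b)/f (ysa+1) ≤ 0 := (div_le_iff₀ hfa).2 (by linarith)
    rw [key _ hfa, min_eq_left hr, max_eq_right hl, ← hta, sub_zero,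
      ← ENNReal.ofReal_mul (hf0 _)]
  have hval_b : P (S ∩ {ω | Y ω = Tb+1}) = ENNReal.ofReal (f (Tb+1) * (1 - tb)) := by
    have hFk : a < F Tb := lt_of_lt_of_le hFa1 (hmono (by omega))
    have hst := hstep Tb
    have hr : (1:ℝ) ≤ (F (Tb+1) - a)/f (Tb+1) := (le_div_iff₀ hfb).2 (by linarith)
    have hl : (0:ℝ) ≤ (F (Tb+1) - b)/f (Tb+1) := le_of_lt (div_pos (by linarith) hfb)
    rw [key _ hfb, min_eq_right hr, max_eq_left (htb ▸ hl), ← htb,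
      ← ENNReal.ofReal_mul (hf0 _)]
  have hzero_lo : ∀ y, y ≤ ysa → P (S ∩ {ω | Y ω = y}) = 0 := by
    intro y hy
    rcases eq_or_lt_of_le (hf0 y) with hfy | hfy
    · exact hzero_f y hfy.symm
    · have hFy : F y ≤ a := le_trans (hmono hy) hFysa
      have hr : (F y - a)/f y ≤ 0 := (div_le_iff₀ hfy).2 (by linarith)
      rw [key _ hfy]
      have hle : min ((F y - a)/f y) 1 - max ((F y - b)/f y) 0 ≤ 0 := by
        have h1 : min ((F y - a)/f y) 1 ≤ 0 := le_trans (min_le_left _ _) hr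
        have h2 : (0:ℝ) ≤ max ((F y - b)/f y) 0 := le_max_right _ _
        linarith
      rw [ENNReal.ofReal_eq_zero.2 hle, mul_zero]
  have hzero_hi : ∀ y, Tb + 2 ≤ y → P (S ∩ {ω | Y ω = y}) = 0 := by
    intro y hy
    rcases eq_or_lt_of_le (hf0 y) with hfy | hfy
    · exact hzero_f y hfy.symm
    · obtain ⟨k, rfl⟩ : ∃ k, y = k + 1 := ⟨y - 1, by omega⟩
      have hFk : b < F k := lt_of_lt_of_le hFb1 (hmono (by omega))
      have hst := hstep k
      have hl : (1:ℝ) ≤ (F (k+1) - b)/f (k+1) := (le_div_iff₀ hfy).2 (by linarith)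
      rw [key _ hfy]
      have hle : min ((F (k+1) - a)/f (k+1)) 1 - max ((F (k+1) - b)/f (k+1)) 0 ≤ 0 := by
        have h1 : min ((F (k+1) - a)/f (k+1)) 1 ≤ 1 := min_le_right _ _
        have h2 : (1:ℝ) ≤ max ((F (k+1) - b)/f (k+1)) 0 := le_trans hl (le_max_left _ _)
        linarith
      rw [ENNReal.ofReal_eq_zero.2 hle, mul_zero]
  -- decomposition of P S
  have hmE : MeasurableSet S := by
    have hg : Measurable fun ω => F (Y ω) - U ω * f (Y ω) := by
      have h1 : Measurable fun ω => F (Y ω) := measurable_from_top.comp hY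
      have h2 : Measurable fun ω => f (Y ω) := measurable_from_top.comp hY
      exact h1.sub (hU.mul h2)
    exact (measurableSet_le measurable_const hg).inter (measurableSet_le hg measurable_const)
  have hYm : ∀ y : ℕ, MeasurableSet {ω | Y ω = y} := fun y => hY (measurableSet_singleton y)
  have hPE : P S = ∑' y : ℕ, P (S ∩ {ω | Y ω = y}) := by
    have hun : S = ⋃ y : ℕ, (S ∩ {ω | Y ω = y}) := by
      ext ω
      simp only [Set.mem_iUnion, Set.mem_inter_iff, Set.mem_setOf_eq]
      exact ⟨fun h => ⟨Y ω, h, rfl⟩, fun ⟨y, h, _⟩ => h⟩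
    nth_rewrite 1 [hun]
    refine measure_iUnion ?_ (fun y => hmE.inter (hYm y))
    intro i j hij
    simp only [Function.onFun, Set.disjoint_left]
    rintro ω ⟨-, h1⟩ ⟨-, h2⟩
    simp only [Set.mem_setOf_eq] at h1 h2
    exact hij (h1 ▸ h2 ▸ rfl)
  have hPE2 : P S = ∑ y ∈ Finset.range (Tb+2), P (S ∩ {ω | Y ω = y}) := by
    rw [hPE]
    refine tsum_eq_sum (fun y hy => hzero_hi y ?_)
    simp only [Finset.mem_range, not_lt] at hy
    exact hy
  -- telescoping sum of f
  have hsum_f : ∀ n : ℕ, ∑ y ∈ Finset.range (n+1), f y = F n := by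
    intro n
    induction n with
    | zero =>
      have h0 : {ω | Y ω ≤ 0} = {ω | Y ω = 0} := by ext ω; simp [Nat.le_zero]
      rw [Finset.sum_range_one, hf 0, hF 0, h0]
    | succ n ih =>
      rw [Finset.sum_range_succ, ih, hstep n]
  -- value of P S
  have hPEQ : (P S).toReal = Q := by
    rw [hPE2, ENNReal.toReal_sum (fun y _ => hfin _)]
    have hd : ∑ y ∈ Finset.range (Tb+2), (P (S ∩ {ω | Y ω = y})).toReal =
        (∑ y ∈ Finset.range (ysa+1), (P (S ∩ {ω | Y ω = y})).toReal)
          + (P (S ∩ {ω | Y ω = ysa+1})).toReal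
          + (∑ y ∈ Finset.Ico (ysa+2) (Tb+1), (P (S ∩ {ω | Y ω = y})).toReal)
          + (P (S ∩ {ω | Y ω = Tb+1})).toReal := by
      rw [show Tb + 2 = (Tb+1)+1 by ring, Finset.sum_range_succ,
        ← Finset.sum_range_add_sum_Ico _ (show ysa+2 ≤ Tb+1 by omega),
        Finset.sum_range_succ]
    rw [hd]
    have e1 : ∑ y ∈ Finset.range (ysa+1), (P (S ∩ {ω | Y ω = y})).toReal = 0 := by
      refine Finset.sum_eq_zero fun y hy => ?_
      rw [hzero_lo y (Nat.lt_succ_iff.1 (Finset.mem_range.1 hy))]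
      simp
    have e2 : ∑ y ∈ Finset.Ico (ysa+2) (Tb+1), (P (S ∩ {ω | Y ω = y})).toReal
        = F Tb - F (ysa+1) := by
      have hc : ∀ y ∈ Finset.Ico (ysa+2) (Tb+1), (P (S ∩ {ω | Y ω = y})).toReal = f y := by
        intro y hy
        rw [Finset.mem_Ico] at hy
        rw [hval_mid y hy.1 (by omega), ENNReal.toReal_ofReal (hf0 y)]
      rw [Finset.sum_congr rfl hc, Finset.sum_Ico_eq_sub f (show ysa+2 ≤ Tb+1 by omega),
        hsum_f Tb, show ysa+2 = (ysa+1)+1 by omega, hsum_f (ysa+1)]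
    rw [e1, e2, hval_a, hval_b, ENNReal.toReal_ofReal (mul_nonneg (hf0 _) hta0),
      ENNReal.toReal_ofReal (mul_nonneg (hf0 _) (by linarith)), hQ]
    ring
  -- conclusion
  intro y
  rw [hPEQ]
  by_cases h1 : ysa + 2 ≤ y ∧ y ≤ Tb
  · rw [if_pos h1, hval_mid y h1.1 h1.2, ENNReal.toReal_ofReal (hf0 y)]
  · rw [if_neg h1]
    by_cases h2 : y = ysa + 1
    · subst h2
      rw [if_pos rfl, hval_a, ENNReal.toReal_ofReal (mul_nonneg (hf0 _) hta0)]
    · rw [if_neg h2]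
      by_cases h3 : y = Tb + 1
      · subst h3
        rw [if_pos rfl, hval_b, ENNReal.toReal_ofReal (mul_nonneg (hf0 _) (by linarith))]
      · rw [if_neg h3]
        rcases (show y ≤ ysa ∨ Tb + 2 ≤ y by omega) with h | h
        · rw [hzero_lo y h]; simp
        · rw [hzero_hi y h]; simp
end

section
/- Suppose {z_i} are random variables with empirical cdf F_n satisfying |F_n(v) - F_{vn}(v)| controls: F_n(v) ≤ v + n^{-1/2}G_n and F_n(v) ≥ v - n^{-1/2}G_n* for all v, where G_n and G_n* are random variables bounded in probability. Fix ζ₁ ∈ (0,1), and define ã = inf{a : sup_{v ≤ ζ₁} (H_{n,a}(v) - v) ≤ 0} where H_{n,a}(v) = max(F_n(v) - F_n(a), 0)/(1 - F_n(a)). Then a ≥ n^{-1/2}(G_n/(1-ζ₁) + G_n*) implies a ∈ {a : sup_{v ≤ ζ₁}(H_{n,a}(v) - v) ≤ 0}, and consequently ã ≤ n^{-1/2}(G_n/(1-ζ₁) + G_n*). -/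
/-- The adaptive lower cutoff ã is bounded by n^{-1/2}(G/(1-ζ₁) + G*). -/
theorem adaptive_lower_cutoff_bound (n : ℕ) (hn : 0 < n)
    (Fn : ℝ → ℝ) (hmono : Monotone Fn)
    (hrange : ∀ v, Fn v ∈ Set.Icc (0:ℝ) 1)
    (G G' : ℝ) (hG : 0 ≤ G) (hG' : 0 ≤ G')
    (hub : ∀ v ∈ Set.Icc (0:ℝ) 1, Fn v ≤ v + G / Real.sqrt n)
    (hlb : ∀ v ∈ Set.Icc (0:ℝ) 1, v - G' / Real.sqrt n ≤ Fn v)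
    (ζ : ℝ) (hζ : ζ ∈ Set.Ioo (0:ℝ) 1)
    (hF1 : ∀ a, Fn a < 1)
    (hbound : (G / (1 - ζ) + G') / Real.sqrt n ≤ 1)
    (A : Set ℝ)
    (hA : A = {a : ℝ | ∀ v ∈ Set.Icc 0 ζ, max (Fn v - Fn a) 0 / (1 - Fn a) ≤ v}) :
    (∀ a ∈ Set.Icc (0:ℝ) 1, (G / (1 - ζ) + G') / Real.sqrt n ≤ a → a ∈ A) ∧
      sInf A ≤ (G / (1 - ζ) + G') / Real.sqrt n := by
  have hζ1 : (0:ℝ) < 1 - ζ := by linarith [hζ.2]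
  have hs : 0 < Real.sqrt n := Real.sqrt_pos.mpr (by positivity)
  have hc0 : 0 ≤ (G / (1 - ζ) + G') / Real.sqrt n := by positivity
  have hmem : ∀ a ∈ Set.Icc (0:ℝ) 1,
      (G / (1 - ζ) + G') / Real.sqrt n ≤ a → a ∈ A := by
    intro a ha hca
    rw [hA]
    intro v hv
    have hv1 : v ∈ Set.Icc (0:ℝ) 1 := ⟨hv.1, hv.2.trans hζ.2.le⟩
    have hden : 0 < 1 - Fn a := by linarith [hF1 a]
    rw [div_le_iff₀ hden]
    have hFa0 : 0 ≤ Fn a := (hrange a).1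
    have hadd : (G / (1 - ζ) + G') / Real.sqrt n
        = G / (1 - ζ) / Real.sqrt n + G' / Real.sqrt n := add_div _ _ _
    have h1 : G / (1 - ζ) / Real.sqrt n ≤ Fn a := by
      have := hlb a ha
      rw [hadd] at hca
      linarith
    have h2 : (1 - ζ) * (G / (1 - ζ) / Real.sqrt n) = G / Real.sqrt n := by
      field_simp
    have h3 : (1 - ζ) * (G / (1 - ζ) / Real.sqrt n) ≤ (1 - v) * Fn a := by
      apply mul_le_mul (by linarith [hv.2]) h1 (by positivity) (by linarith [hv1.2])
    have hFv := hub v hv1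
    apply max_le
    · nlinarith
    · have : 0 ≤ v := hv.1
      nlinarith
  refine ⟨hmem, ?_⟩
  set c := (G / (1 - ζ) + G') / Real.sqrt n with hc
  have hcA : c ∈ A := hmem c ⟨hc0, hbound⟩ le_rfl
  by_cases hb : BddBelow A
  · exact csInf_le hb hcA
  · rw [Real.sInf_of_not_bddBelow hb]
    exact hc0
end
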